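/- The center 𝔷(𝔎_{r,s}) of the Lie algebra 𝔎_{r,s} equals the F-span of the set of basis elements e_I that lie in 𝔷(𝔎_{r,s}). Equivalently: if ξ = Σ_I ξ_I e_I ∈ 𝔷(𝔎_{r,s}) (the sum over multi-indices I with e_I ∈ 𝔎_{r,s}) and ξ_I ≠ 0, then e_I ∈ 𝔷(𝔎_{r,s}). -/

import Mathlib

/-
Setting (Eberlein, "Isometries of Clifford Algebras II"):
`F` a field with `char F ≠ 2`, `n = r + s > 0`, and `Cl(r,s)` the Clifford algebra of `F^n`
in which `eᵢ·eⱼ = -eⱼ·eᵢ` for `i ≠ j`, `eᵢ² = -1` for the first `r` indices and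
`eᵢ² = +1` for the last `s` indices.
-/

open CliffordAlgebra

namespace CliffPaper

/-- The quadratic form `q(x) = -x₁² - … - x_r² + x_{r+1}² + … + x_n²` on `F^(r+s)`. -/
noncomputable def Qf (F : Type*) [Field F] (r s : ℕ) : QuadraticForm F (Fin (r + s) → F) :=
  QuadraticMap.weightedSumSquares F (fun i : Fin (r + s) => if (i : ℕ) < r then (-1 : F) else 1)

/-- The Clifford algebra `Cl(r,s)`. -/
abbrev Cl (F : Type*) [Field F] (r s : ℕ) : Type _ := CliffordAlgebra (Qf F r s)

/-- The generator `e_i` of `Cl(r,s)` (`i` is a zero-based index, so `e_i² = -1` for `i < r`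
and `e_i² = +1` for `r ≤ i`). -/
noncomputable def gen (F : Type*) [Field F] (r s : ℕ) (i : Fin (r + s)) : Cl F r s :=
  ι (Qf F r s) (Pi.single i 1)

/-- For a multi-index `I = {i₁ < … < i_k}`, the product `e_I = e_{i₁} ⋯ e_{i_k}`. -/
noncomputable def eProd (F : Type*) [Field F] (r s : ℕ) (I : Finset (Fin (r + s))) : Cl F r s :=
  ((I.sort (· ≤ ·)).map (gen F r s)).prod

/-- Clifford conjugation: the unique anti-automorphism `c` of `Cl(r,s)` with `c ∘ c = id` and
`c(v) = -v` for all `v ∈ F^n`; concretely, reversal composed with the grade involution. -/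
noncomputable def conj (F : Type*) [Field F] (r s : ℕ) : Cl F r s →ₗ[F] Cl F r s :=
  (reverse (Q := Qf F r s)).comp (involute (Q := Qf F r s)).toLinearMap

theorem conj_mul (F : Type*) [Field F] (r s : ℕ) (a b : Cl F r s) :
    conj F r s (a * b) = conj F r s b * conj F r s a := by
  simp [conj, reverse.map_mul]

/-- `𝔊_{r,s} = {x ∈ Cl(r,s) : c(x) = -x}`, the `-1`-eigenspace of Clifford conjugation,
as an `F`-subspace of `Cl(r,s)`. -/
noncomputable def Gsub (F : Type*) [Field F] (r s : ℕ) : Submodule F (Cl F r s) :=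
  LinearMap.ker (conj F r s + LinearMap.id)

theorem mem_Gsub {F : Type*} [Field F] {r s : ℕ} (x : Cl F r s) :
    x ∈ Gsub F r s ↔ conj F r s x = -x := by
  simp [Gsub, LinearMap.mem_ker, add_eq_zero_iff_eq_neg]

attribute [local instance] LieRing.ofAssociativeRing

/-- `𝔊_{r,s}` as a Lie subalgebra of `Cl(r,s)` with the commutator bracket
`⁅x,y⁆ = x*y - y*x`. -/
noncomputable def GLie (F : Type*) [Field F] (r s : ℕ) : LieSubalgebra F (Cl F r s) where
  toSubmodule := Gsub F r s
  lie_mem' := by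
    intro x y hx hy
    have hx' : x ∈ Gsub F r s := hx
    have hy' : y ∈ Gsub F r s := hy
    show ⁅x, y⁆ ∈ Gsub F r s
    rw [mem_Gsub] at hx' hy' ⊢
    rw [Ring.lie_def, map_sub, conj_mul, conj_mul, hx', hy']
    noncomm_ring

/-- `𝔎_{r,s}`: the `+1`-eigenspace of `β` restricted to `𝔊_{r,s}`. -/
noncomputable def Ksub (F : Type*) [Field F] (r s : ℕ) (β : Cl F r s ≃ₐ[F] Cl F r s) :
    Submodule F (Cl F r s) :=
  LinearMap.ker (β.toLinearMap - LinearMap.id) ⊓ Gsub F r s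

/-- `𝔓_{r,s}`: the `-1`-eigenspace of `β` restricted to `𝔊_{r,s}`. -/
noncomputable def Psub (F : Type*) [Field F] (r s : ℕ) (β : Cl F r s ≃ₐ[F] Cl F r s) :
    Submodule F (Cl F r s) :=
  LinearMap.ker (β.toLinearMap + LinearMap.id) ⊓ Gsub F r s

/-- The center `𝔷(𝔎_{r,s}) = {x ∈ 𝔎_{r,s} : [x,y] = 0 for all y ∈ 𝔎_{r,s}}`. -/
noncomputable def ZKsub (F : Type*) [Field F] (r s : ℕ) (β : Cl F r s ≃ₐ[F] Cl F r s) :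
    Submodule F (Cl F r s) where
  carrier := {x | x ∈ Ksub F r s β ∧ ∀ y ∈ Ksub F r s β, x * y = y * x}
  zero_mem' := ⟨zero_mem _, fun y _ => by simp⟩
  add_mem' := fun {a b} ha hb => ⟨add_mem ha.1 hb.1, fun y hy => by
    rw [add_mul, mul_add, ha.2 y hy, hb.2 y hy]⟩
  smul_mem' := fun c a ha => ⟨Submodule.smul_mem _ c ha.1, fun y hy => by
    rw [smul_mul_assoc, mul_smul_comm, ha.2 y hy]⟩

/-- `𝔥_{r,s}`: the span of the `e_I` with `|I| ≡ 1, 2 (mod 4)` and `I ≠ {1,…,n}`. -/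
noncomputable def Hsub (F : Type*) [Field F] (r s : ℕ) : Submodule F (Cl F r s) :=
  Submodule.span F {x | ∃ I : Finset (Fin (r + s)), I.Nonempty ∧ I ≠ Finset.univ ∧
    (I.card % 4 = 1 ∨ I.card % 4 = 2) ∧ x = eProd F r s I}

/-- The volume element `ω = e₁e₂⋯e_n`. -/
noncomputable def omegaEl (F : Type*) [Field F] (r s : ℕ) : Cl F r s :=
  eProd F r s Finset.univ

section Aux1
variable {F : Type*} [Field F] {r s : ℕ}

def w (F : Type*) [Field F] (r s : ℕ) (i : Fin (r + s)) : F :=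
  if (i : ℕ) < r then (-1 : F) else 1

lemma w_mul_self (i : Fin (r+s)) : w F r s i * w F r s i = 1 := by
  unfold w; split <;> norm_num

lemma Qf_single (i : Fin (r+s)) : Qf F r s (Pi.single i 1) = w F r s i := by
  simp [Qf, QuadraticMap.weightedSumSquares_apply, Pi.single_apply, w]

lemma Qf_single_add {i j : Fin (r+s)} (h : i ≠ j) :
    Qf F r s (Pi.single i 1 + Pi.single j 1) = w F r s i + w F r s j := by
  rw [Qf, QuadraticMap.weightedSumSquares_apply]
  have : ∀ k : Fin (r+s), (if (k:ℕ) < r then (-1:F) else 1) •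
      (((Pi.single i 1 + Pi.single j 1 : Fin (r+s) → F)) k * ((Pi.single i 1 + Pi.single j 1 : Fin (r+s) → F)) k)
      = (if k = i then w F r s k else 0) + (if k = j then w F r s k else 0) := by
    intro k
    rcases eq_or_ne k i with rfl | hki <;> rcases eq_or_ne k j with rfl | hkj <;>
      simp_all [Pi.single_apply, w, smul_eq_mul]
  rw [Finset.sum_congr rfl fun k _ => this k, Finset.sum_add_distrib,
    Finset.sum_ite_eq' Finset.univ i, Finset.sum_ite_eq' Finset.univ j]
  simp

lemma gen_sq (i : Fin (r+s)) :
    gen F r s i * gen F r s i = algebraMap F (Cl F r s) (w F r s i) := by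
  rw [gen, ι_sq_scalar, Qf_single]

lemma gen_anticomm {i j : Fin (r+s)} (h : i ≠ j) :
    gen F r s i * gen F r s j = -(gen F r s j * gen F r s i) := by
  have h2 := ι_mul_ι_add_swap (Q := Qf F r s) (Pi.single i 1) (Pi.single j 1)
  rw [QuadraticMap.polar, Qf_single_add h, Qf_single, Qf_single] at h2
  rw [show w F r s i + w F r s j - w F r s i - w F r s j = 0 from by ring, map_zero] at h2
  rw [gen, gen]
  exact eq_neg_of_add_eq_zero_left h2


noncomputable def gp (F : Type*) [Field F] (r s : ℕ) (L : List (Fin (r + s))) : Cl F r s :=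
  (L.map (gen F r s)).prod

lemma gp_nil : gp F r s [] = 1 := rfl

lemma gp_cons (i : Fin (r+s)) (L : List (Fin (r+s))) :
    gp F r s (i :: L) = gen F r s i * gp F r s L := by
  simp [gp]

lemma eProd_empty : eProd F r s ∅ = 1 := by simp [eProd, Finset.sort_empty]

lemma eProd_singleton (i : Fin (r+s)) : eProd F r s {i} = gen F r s i := by
  simp [eProd, Finset.sort_singleton]

lemma eProd_eq_gp (I : Finset (Fin (r+s))) : eProd F r s I = gp F r s (I.sort (· ≤ ·)) := rfl

lemma eProd_toFinset {L : List (Fin (r+s))} (hL : L.Pairwise (· < ·)) :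
    eProd F r s L.toFinset = gp F r s L := by
  rw [eProd_eq_gp, (List.toFinset_sort (· ≤ ·) hL.nodup).2 (hL.imp le_of_lt)]

/-- Key rewriting lemma: multiplying a sorted product by a generator on the left. -/
lemma gen_mul_gp (i : Fin (r+s)) :
    ∀ L : List (Fin (r+s)), L.Pairwise (· < ·) →
      ∃ c : F, ∃ M : List (Fin (r+s)), M.Pairwise (· < ·) ∧
        (∀ x ∈ M, x = i ∨ x ∈ L) ∧
        gen F r s i * gp F r s L = c • gp F r s M := by
  intro L
  induction L with
  | nil =>
    intro _
    exact ⟨1, [i], List.pairwise_singleton _ i, by simp, by simp [gp_nil, gp_cons]⟩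
  | cons a L ih =>
    intro hL
    have hL' : L.Pairwise (· < ·) := hL.of_cons
    have ha : ∀ x ∈ L, a < x := fun x hx => (List.pairwise_cons.1 hL).1 x hx
    rcases lt_trichotomy i a with hia | rfl | hai
    · refine ⟨1, i :: a :: L, ?_, by simp +contextual [or_assoc], by simp [gp_cons]⟩
      exact List.pairwise_cons.2 ⟨fun x hx => by
        rcases List.mem_cons.1 hx with rfl | hx
        · exact hia
        · exact hia.trans (ha x hx), hL⟩
    · refine ⟨w F r s i, L, hL', fun x hx => Or.inr (List.mem_cons_of_mem _ hx), ?_⟩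
      rw [gp_cons, ← mul_assoc, gen_sq, Algebra.smul_def]
    · obtain ⟨c, M, hM, hMsub, hmul⟩ := ih hL'
      refine ⟨-c, a :: M, ?_, ?_, ?_⟩
      · exact List.pairwise_cons.2 ⟨fun x hx => by
          rcases hMsub x hx with rfl | hx
          · exact hai
          · exact ha x hx, hM⟩
      · intro x hx
        rcases List.mem_cons.1 hx with rfl | hx
        · exact Or.inr (List.mem_cons_self)
        · rcases hMsub x hx with rfl | h
          · exact Or.inl rfl
          · exact Or.inr (List.mem_cons_of_mem _ h)
      · have hia : i ≠ a := ne_of_gt hai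
        rw [gp_cons, ← mul_assoc, gen_anticomm hia, neg_mul, mul_assoc, hmul, gp_cons]
        rw [mul_smul_comm, neg_smul]

/-- The set of all `eProd I` (including `I = ∅`, giving `1`). -/
def Bset (F : Type*) [Field F] (r s : ℕ) : Set (Cl F r s) := Set.range (eProd F r s)

lemma gen_mul_eProd_mem (i : Fin (r+s)) (J : Finset (Fin (r+s))) :
    gen F r s i * eProd F r s J ∈ Submodule.span F (Bset F r s) := by
  obtain ⟨c, M, hM, -, hmul⟩ := gen_mul_gp (F := F) i (J.sort (· ≤ ·)) (Finset.sortedLT_sort J).pairwise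
  rw [eProd_eq_gp, hmul, ← eProd_toFinset hM]
  exact Submodule.smul_mem _ _ (Submodule.subset_span ⟨M.toFinset, rfl⟩)

lemma gen_mul_mem_span (i : Fin (r+s)) {x : Cl F r s}
    (hx : x ∈ Submodule.span F (Bset F r s)) :
    gen F r s i * x ∈ Submodule.span F (Bset F r s) := by
  induction hx using Submodule.span_induction with
  | mem x hx => obtain ⟨J, rfl⟩ := hx; exact gen_mul_eProd_mem i J
  | zero => simp
  | add x y _ _ hx hy => rw [mul_add]; exact add_mem hx hy
  | smul c x _ hx => rw [mul_smul_comm]; exact Submodule.smul_mem _ _ hx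

lemma span_Bset_eq_top : Submodule.span F (Bset F r s) = ⊤ := by
  rw [eq_top_iff]
  rintro x -
  have key : ∀ x : Cl F r s, ∀ y ∈ Submodule.span F (Bset F r s),
      x * y ∈ Submodule.span F (Bset F r s) := by
    intro x
    induction x using CliffordAlgebra.induction with
    | algebraMap c =>
      intro y hy
      rw [Algebra.algebraMap_eq_smul_one, smul_mul_assoc, one_mul]
      exact Submodule.smul_mem _ _ hy
    | ι v =>
      intro y hy
      have hv : ι (Qf F r s) v = ∑ k, v k • gen F r s k := by
        conv_lhs => rw [← Finset.univ_sum_single v]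
        rw [map_sum]
        refine Finset.sum_congr rfl fun k _ => ?_
        rw [gen, ← map_smul, ← Pi.single_smul, smul_eq_mul, mul_one]
      rw [hv, Finset.sum_mul]
      exact Submodule.sum_mem _ fun k _ => by
        rw [smul_mul_assoc]; exact Submodule.smul_mem _ _ (gen_mul_mem_span k hy)
    | mul a b ha hb =>
      intro y hy
      rw [mul_assoc]
      exact ha _ (hb _ hy)
    | add a b ha hb =>
      intro y hy
      rw [add_mul]
      exact add_mem (ha _ hy) (hb _ hy)
  have h1 : (1 : Cl F r s) ∈ Submodule.span F (Bset F r s) :=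
    Submodule.subset_span ⟨∅, eProd_empty⟩
  simpa using key x 1 h1


end Aux1

section Aux2
variable {F : Type*} [Field F] {r s : ℕ}

lemma conj_ι (v : Fin (r+s) → F) :
    conj F r s (ι (Qf F r s) v) = - ι (Qf F r s) v := by
  simp [conj]

lemma conj_gen (i : Fin (r+s)) : conj F r s (gen F r s i) = -(gen F r s i) := conj_ι _

lemma conj_one : conj F r s (1 : Cl F r s) = 1 := by simp [conj]

lemma conj_involute_comm (x : Cl F r s) :
    conj F r s (involute x) = involute (conj F r s x) := by
  simp [conj, reverse_involute]

section Beta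
variable (β : Cl F r s ≃ₐ[F] Cl F r s)
    (hβ : ∀ v : Fin (r + s) → F,
      β (ι (Qf F r s) v) = ι (Qf F r s) (fun i => if (i : ℕ) < r then v i else -v i))

include hβ

lemma beta_involute (x : Cl F r s) : β (involute x) = involute (β x) := by
  induction x using CliffordAlgebra.induction with
  | algebraMap c => simp
  | ι v => rw [involute_ι, map_neg, hβ, involute_ι]
  | mul a b ha hb => rw [map_mul, map_mul, map_mul, map_mul, ha, hb]
  | add a b ha hb => rw [map_add, map_add, map_add, map_add, ha, hb]

lemma beta_gen (j : Fin (r+s)) :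
    β (gen F r s j) = (if (j:ℕ) < r then (1:F) else -1) • gen F r s j := by
  rw [gen, hβ, ← map_smul]
  congr 1
  funext i
  rcases eq_or_ne i j with rfl | hij
  · by_cases h : (i:ℕ) < r <;> simp [Pi.single_apply, h]
  · simp only [Pi.smul_apply, Pi.single_apply, if_neg hij, smul_zero]
    split <;> simp

end Beta

noncomputable def Tm (F : Type*) [Field F] (r s : ℕ) (j : Fin (r+s)) :
    Cl F r s →ₗ[F] Cl F r s :=
  w F r s j • ((LinearMap.mulRight F (gen F r s j)).comp
    ((LinearMap.mulLeft F (gen F r s j)).comp (involute (Q := Qf F r s)).toLinearMap))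

lemma Tm_apply (j : Fin (r+s)) (x : Cl F r s) :
    Tm F r s j x = w F r s j • (gen F r s j * involute x * gen F r s j) := rfl

lemma gg_left (j : Fin (r+s)) (x : Cl F r s) :
    gen F r s j * (gen F r s j * x) = w F r s j • x := by
  rw [← mul_assoc, gen_sq, Algebra.smul_def]

lemma Tm_mul (j : Fin (r+s)) (a b : Cl F r s) :
    Tm F r s j (a * b) = Tm F r s j a * Tm F r s j b := by
  rw [Tm_apply, Tm_apply, Tm_apply, map_mul, smul_mul_smul_comm, w_mul_self, one_smul]
  simp only [mul_assoc]
  rw [gg_left, mul_smul_comm, mul_smul_comm]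

lemma Tm_one (j : Fin (r+s)) : Tm F r s j (1 : Cl F r s) = 1 := by
  rw [Tm_apply, map_one, mul_one, gen_sq, Algebra.algebraMap_eq_smul_one, smul_smul,
    w_mul_self, one_smul]

lemma Tm_gen (j i : Fin (r+s)) :
    Tm F r s j (gen F r s i) = (if i = j then (-1:F) else 1) • gen F r s i := by
  rw [Tm_apply, show involute (gen F r s i) = -(gen F r s i) from by rw [gen, involute_ι]]
  rcases eq_or_ne i j with rfl | hij
  · rw [mul_neg, neg_mul, mul_assoc, gg_left, smul_neg, smul_smul, w_mul_self,
      if_pos rfl, neg_smul, one_smul]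
  · rw [mul_neg, ← gen_anticomm hij, mul_assoc, gen_sq, ← Algebra.commutes,
      ← Algebra.smul_def, smul_smul, w_mul_self, one_smul, if_neg hij, one_smul]

lemma Tm_gp (j : Fin (r+s)) (L : List (Fin (r+s))) :
    Tm F r s j (gp F r s L) = ((-1:F) ^ (L.count j)) • gp F r s L := by
  induction L with
  | nil => rw [gp_nil, Tm_one]; simp
  | cons a L ih =>
    rw [gp_cons, Tm_mul, ih, Tm_gen, List.count_cons]
    rcases eq_or_ne a j with rfl | haj
    · simp [smul_smul, pow_succ, mul_comm]
    · simp [haj, smul_smul, mul_comm]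

lemma Tm_eProd (j : Fin (r+s)) (J : Finset (Fin (r+s))) :
    Tm F r s j (eProd F r s J) = (if j ∈ J then (-1:F) else 1) • eProd F r s J := by
  rw [eProd_eq_gp, Tm_gp]
  by_cases hj : j ∈ J
  · rw [if_pos hj, List.count_eq_one_of_mem (J.sort_nodup (· ≤ ·))
      ((Finset.mem_sort (· ≤ ·)).2 hj), pow_one]
  · rw [if_neg hj, List.count_eq_zero_of_not_mem
      (fun h => hj ((Finset.mem_sort (· ≤ ·)).1 h)), pow_zero]

lemma Tm_Tm (j : Fin (r+s)) (x : Cl F r s) : Tm F r s j (Tm F r s j x) = x := by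
  have h : (Tm F r s j).comp (Tm F r s j) = LinearMap.id := by
    apply LinearMap.ext_on (span_Bset_eq_top (F := F) (r := r) (s := s))
    rintro x ⟨J, rfl⟩
    by_cases hj : j ∈ J <;>
      simp [Tm_eProd, hj, smul_smul]
  exact congrArg (fun f => f x) (congrArg DFunLike.coe h)

end Aux2


section Aux3
variable {F : Type*} [Field F] {r s : ℕ} {β : Cl F r s ≃ₐ[F] Cl F r s}

lemma mem_Ksub {x : Cl F r s} :
    x ∈ Ksub F r s β ↔ β x = x ∧ conj F r s x = -x := by
  rw [Ksub, Submodule.mem_inf, mem_Gsub, LinearMap.mem_ker, LinearMap.sub_apply,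
    LinearMap.id_apply, AlgEquiv.toLinearMap_apply, sub_eq_zero]

lemma mem_ZKsub {x : Cl F r s} :
    x ∈ ZKsub F r s β ↔ x ∈ Ksub F r s β ∧ ∀ y ∈ Ksub F r s β, x * y = y * x :=
  Iff.rfl

variable (hβ : ∀ v : Fin (r + s) → F,
      β (ι (Qf F r s) v) = ι (Qf F r s) (fun i => if (i : ℕ) < r then v i else -v i))

include hβ

lemma Tm_mem_Ksub {x : Cl F r s} (hx : x ∈ Ksub F r s β) (j : Fin (r+s)) :
    Tm F r s j x ∈ Ksub F r s β := by
  rw [mem_Ksub] at hx ⊢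
  obtain ⟨hb, hc⟩ := hx
  constructor
  · rw [Tm_apply, map_smul, map_mul, map_mul, beta_gen β hβ, beta_involute β hβ, hb]
    by_cases h : (j:ℕ) < r <;>
      simp [h, smul_mul_assoc, mul_smul_comm, smul_smul]
  · rw [Tm_apply, map_smul, conj_mul, conj_mul, conj_gen, conj_involute_comm, hc,
      map_neg]
    simp [mul_neg, neg_mul, mul_assoc]

lemma Tm_mem_ZKsub {x : Cl F r s} (hx : x ∈ ZKsub F r s β) (j : Fin (r+s)) :
    Tm F r s j x ∈ ZKsub F r s β := by
  rw [mem_ZKsub] at hx ⊢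
  obtain ⟨hxK, hxc⟩ := hx
  refine ⟨Tm_mem_Ksub hβ hxK j, fun y hy => ?_⟩
  calc Tm F r s j x * y = Tm F r s j x * Tm F r s j (Tm F r s j y) := by rw [Tm_Tm]
    _ = Tm F r s j (x * Tm F r s j y) := (Tm_mul j _ _).symm
    _ = Tm F r s j (Tm F r s j y * x) := by rw [hxc _ (Tm_mem_Ksub hβ hy j)]
    _ = Tm F r s j (Tm F r s j y) * Tm F r s j x := Tm_mul j _ _
    _ = y * Tm F r s j x := by rw [Tm_Tm]

end Aux3

section Aux4
variable {F : Type*} [Field F] {r s : ℕ}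

/-- The projection associated to generator `j` and target multi-index `I`. -/
noncomputable def pim (F : Type*) [Field F] (r s : ℕ) (I : Finset (Fin (r+s)))
    (j : Fin (r+s)) : Cl F r s →ₗ[F] Cl F r s :=
  (2⁻¹ : F) • (LinearMap.id + (if j ∈ I then (-1:F) else 1) • Tm F r s j)

lemma pim_eProd (hF : ringChar F ≠ 2) (I : Finset (Fin (r+s))) (j : Fin (r+s))
    (J : Finset (Fin (r+s))) :
    pim F r s I j (eProd F r s J) =
      if (j ∈ I ↔ j ∈ J) then eProd F r s J else 0 := by
  have h2 : (2 : F) ≠ 0 := Ring.two_ne_zero hF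
  have key : ∀ e : Cl F r s, (2⁻¹ : F) • (e + e) = e := fun e => by
    rw [← two_smul F, smul_smul, inv_mul_cancel₀ h2, one_smul]
  rw [pim]
  simp only [LinearMap.smul_apply, LinearMap.add_apply, LinearMap.id_apply, Tm_eProd]
  by_cases h1 : j ∈ I <;> by_cases h2' : j ∈ J <;>
    simp [h1, h2', key, smul_smul]

lemma pim_mem_ZKsub {β : Cl F r s ≃ₐ[F] Cl F r s}
    (hβ : ∀ v : Fin (r + s) → F,
      β (ι (Qf F r s) v) = ι (Qf F r s) (fun i => if (i : ℕ) < r then v i else -v i))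
    {x : Cl F r s} (hx : x ∈ ZKsub F r s β) (I : Finset (Fin (r+s))) (j : Fin (r+s)) :
    pim F r s I j x ∈ ZKsub F r s β := by
  rw [pim]
  simp only [LinearMap.smul_apply, LinearMap.add_apply, LinearMap.id_apply]
  exact Submodule.smul_mem _ _ (add_mem hx (Submodule.smul_mem _ _ (Tm_mem_ZKsub hβ hx j)))

/-- Composite of the `pim` projections along a list of indices. -/
noncomputable def Pl (F : Type*) [Field F] (r s : ℕ) (I : Finset (Fin (r+s))) :
    List (Fin (r+s)) → (Cl F r s →ₗ[F] Cl F r s)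
  | [] => LinearMap.id
  | j :: L => (Pl F r s I L).comp (pim F r s I j)

lemma Pl_eProd (hF : ringChar F ≠ 2) (I : Finset (Fin (r+s))) (L : List (Fin (r+s)))
    (J : Finset (Fin (r+s))) :
    Pl F r s I L (eProd F r s J) =
      if (∀ j ∈ L, (j ∈ I ↔ j ∈ J)) then eProd F r s J else 0 := by
  induction L with
  | nil => simp [Pl]
  | cons j L ih =>
    rw [Pl, LinearMap.comp_apply, pim_eProd hF]
    by_cases h : (j ∈ I ↔ j ∈ J)
    · rw [if_pos h, ih]
      by_cases h' : ∀ k ∈ L, (k ∈ I ↔ k ∈ J)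
      · rw [if_pos h', if_pos (by simpa [List.forall_mem_cons] using ⟨h, h'⟩)]
      · rw [if_neg h', if_neg (fun hall => h' fun k hk => hall k (List.mem_cons_of_mem _ hk))]
    · rw [if_neg h, map_zero, if_neg (fun hall => h (hall j (List.mem_cons_self)))]

lemma Pl_mem_ZKsub {β : Cl F r s ≃ₐ[F] Cl F r s}
    (hβ : ∀ v : Fin (r + s) → F,
      β (ι (Qf F r s) v) = ι (Qf F r s) (fun i => if (i : ℕ) < r then v i else -v i))
    {x : Cl F r s} (hx : x ∈ ZKsub F r s β) (I : Finset (Fin (r+s)))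
    (L : List (Fin (r+s))) : Pl F r s I L x ∈ ZKsub F r s β := by
  induction L generalizing x with
  | nil => exact hx
  | cons j L ih => exact ih (pim_mem_ZKsub hβ hx I j)

/-- The full projection onto the `eProd I` component. -/
noncomputable def Pfull (F : Type*) [Field F] (r s : ℕ) (I : Finset (Fin (r+s))) :
    Cl F r s →ₗ[F] Cl F r s :=
  Pl F r s I (List.finRange (r+s))

lemma Pfull_eProd (hF : ringChar F ≠ 2) (I J : Finset (Fin (r+s))) :
    Pfull F r s I (eProd F r s J) = if I = J then eProd F r s J else 0 := by
  rw [Pfull, Pl_eProd hF]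
  congr 1
  simp only [List.mem_finRange, true_implies, eq_iff_iff]
  exact ⟨fun h => Finset.ext fun j => h j, fun h j => by rw [h]⟩

lemma sum_Pfull (hF : ringChar F ≠ 2) (x : Cl F r s) :
    ∑ I : Finset (Fin (r+s)), Pfull F r s I x = x := by
  have h : (∑ I : Finset (Fin (r+s)), Pfull F r s I) = LinearMap.id := by
    apply LinearMap.ext_on (span_Bset_eq_top (F := F) (r := r) (s := s))
    rintro x ⟨J, rfl⟩
    rw [LinearMap.sum_apply, LinearMap.id_apply]
    rw [Finset.sum_congr rfl fun I _ => Pfull_eProd hF I J]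
    simp
  calc ∑ I : Finset (Fin (r+s)), Pfull F r s I x
      = (∑ I : Finset (Fin (r+s)), Pfull F r s I) x := by rw [LinearMap.sum_apply]
    _ = x := by rw [h, LinearMap.id_apply]

lemma Pfull_mem_span_singleton (hF : ringChar F ≠ 2) (I : Finset (Fin (r+s)))
    (x : Cl F r s) : Pfull F r s I x ∈ Submodule.span F {eProd F r s I} := by
  have hx : x ∈ Submodule.span F (Bset F r s) := by
    rw [span_Bset_eq_top]; trivial
  induction hx using Submodule.span_induction with
  | mem y hy =>
    obtain ⟨J, rfl⟩ := hy
    rw [Pfull_eProd hF]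
    by_cases h : I = J
    · subst h; rw [if_pos rfl]; exact Submodule.subset_span rfl
    · rw [if_neg h]; exact zero_mem _
  | zero => rw [map_zero]; exact zero_mem _
  | add y z _ _ hy hz => rw [map_add]; exact add_mem hy hz
  | smul c y _ hy => rw [map_smul]; exact Submodule.smul_mem _ _ hy

end Aux4

/-- the center 𝔷(𝔎_{r,s}) equals the F-span of the basis elements e_I lying
in 𝔷(𝔎_{r,s}). -/
theorem statement10 (F : Type*) [Field F] (hF : ringChar F ≠ 2) (r s : ℕ) (hn : 0 < r + s)
    (β : Cl F r s ≃ₐ[F] Cl F r s)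
    (hβ : ∀ v : Fin (r + s) → F,
      β (ι (Qf F r s) v) = ι (Qf F r s) (fun i => if (i : ℕ) < r then v i else -v i)) :
    ZKsub F r s β = Submodule.span F
      {x | (∃ I : Finset (Fin (r + s)), I.Nonempty ∧ x = eProd F r s I) ∧
        x ∈ ZKsub F r s β} := by
  have h2 : (2:F) ≠ 0 := Ring.two_ne_zero hF
  haveI : Invertible (2:F) := invertibleOfNonzero h2
  apply le_antisymm
  · intro x hx
    rw [← sum_Pfull hF x]
    apply Submodule.sum_mem
    intro I _
    obtain ⟨c, hc⟩ := Submodule.mem_span_singleton.1 (Pfull_mem_span_singleton hF I x)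
    have hPZK : Pfull F r s I x ∈ ZKsub F r s β := Pl_mem_ZKsub hβ hx I _
    by_cases hI : I = ∅
    · subst hI
      have h1 : Pfull F r s ∅ x = c • 1 := by rw [← hc, eProd_empty]
      have hK : Pfull F r s ∅ x ∈ Ksub F r s β := (mem_ZKsub.1 hPZK).1
      have hconj : conj F r s (Pfull F r s ∅ x) = -(Pfull F r s ∅ x) :=
        (mem_Ksub.1 hK).2
      rw [h1, map_smul, conj_one] at hconj
      have hz : ((2 * c) • (1 : Cl F r s)) = 0 := by
        rw [mul_comm, mul_smul, two_smul, smul_add]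
        nth_rewrite 1 [hconj]
        exact neg_add_cancel _
      have hc2 : (2 * c : F) = 0 := by
        have hinj : Function.Injective (algebraMap F (Cl F r s)) :=
          (algebraMap F (Cl F r s)).injective
        apply hinj
        rw [map_zero, Algebra.algebraMap_eq_smul_one, hz]
      have hc0 : c = 0 := by
        rcases mul_eq_zero.1 hc2 with h | h
        · exact absurd h h2
        · exact h
      rw [h1, hc0, zero_smul]
      exact zero_mem _
    · by_cases hc0 : c = 0
      · rw [← hc, hc0, zero_smul]; exact zero_mem _
      · rw [← hc]
        apply Submodule.smul_mem
        apply Submodule.subset_span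
        refine ⟨⟨I, Finset.nonempty_iff_ne_empty.2 hI, rfl⟩, ?_⟩
        have he : eProd F r s I = c⁻¹ • Pfull F r s I x := by
          rw [← hc, smul_smul, inv_mul_cancel₀ hc0, one_smul]
        rw [he]
        exact Submodule.smul_mem _ _ hPZK
  · rw [Submodule.span_le]
    rintro x ⟨-, hx⟩
    exact hx

end CliffPaper
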